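/- arXiv:2103.17034 — 2 statements merged into one kernel-verified Lean document; each statement's English description precedes it below -/
import Mathlib

section
/- Define P_i = (2/(i+1)) · Σ_{n=0}^∞ (−1)^n · (∏_{j=0}^{n} ((i+1)/2 − j)) / (n! · (2n+1)) for natural i ≥ 1. Then π = 2·i·P_i·P_{i−1} for every natural number i ≥ 2. -/
open Finset Real

noncomputable def P (i : ℕ) : ℝ :=
  (2 / ((i : ℝ) + 1)) *
    ∑' n : ℕ, (-1 : ℝ) ^ n *
      (∏ j ∈ Finset.range (n + 1), (((i : ℝ) + 1) / 2 - (j : ℝ))) /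
        ((n.factorial : ℝ) * (2 * (n : ℝ) + 1))

open Finset Real Filter MeasureTheory intervalIntegral

noncomputable def cc (b : ℝ) (n : ℕ) : ℝ := (∏ j ∈ Finset.range n, (b - j)) / n.factorial

lemma cc_zero (b : ℝ) : cc b 0 = 1 := by simp [cc]

lemma cc_succ (b : ℝ) (n : ℕ) : cc b (n + 1) = cc b n * (b - n) / (n + 1) := by
  have h1 : (n.factorial : ℝ) ≠ 0 := Nat.cast_ne_zero.mpr n.factorial_ne_zero
  have h2 : ((n:ℝ) + 1) ≠ 0 := by positivity
  rw [cc, cc, Finset.prod_range_succ, Nat.factorial_succ]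
  push_cast
  rw [div_mul_eq_mul_div, div_div, mul_comm ((n:ℝ)+1)]

lemma cc_prod_key (b : ℝ) (n : ℕ) :
    (∏ j ∈ Finset.range n, (b - j)) * (b - n) = b * ∏ j ∈ Finset.range n, (b - 1 - j) := by
  have h3 : (∏ j ∈ Finset.range (n+1), (b - j)) = (∏ j ∈ Finset.range n, (b - j)) * (b - n) :=
    Finset.prod_range_succ _ _
  have h4 : (∏ j ∈ Finset.range (n+1), (b - j)) = (∏ j ∈ Finset.range n, (b - ((j:ℕ)+1:ℕ))) * (b - (0:ℕ)) :=
    Finset.prod_range_succ' _ _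
  rw [h3] at h4
  rw [h4]
  push_cast
  rw [sub_zero, mul_comm]
  congr 1
  exact Finset.prod_congr rfl (fun j _ => by ring)

lemma cc_key (b : ℝ) (n : ℕ) : ((n:ℝ) + 1) * cc b (n + 1) = b * cc (b - 1) n := by
  have h2 : ((n:ℝ) + 1) ≠ 0 := by positivity
  rw [cc_succ, mul_comm, div_mul_cancel₀ _ h2, cc, cc, div_mul_eq_mul_div, cc_prod_key,
    mul_div_assoc]

lemma cc_pascal (b : ℝ) (n : ℕ) :
    cc b (n + 1) = cc (b - 1) (n + 1) + cc (b - 1) n := by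
  have h2 : ((n:ℝ) + 1) ≠ 0 := by positivity
  have e : cc (b-1) (n+1) + cc (b-1) n = cc (b-1) n * b / ((n:ℝ)+1) := by
    rw [cc_succ (b-1) n]; field_simp; ring
  rw [e, mul_comm, ← cc_key, mul_comm, mul_div_assoc, div_self h2, mul_one]

lemma cc_partial (b : ℝ) (N : ℕ) :
    ∑ n ∈ Finset.range (N + 1), (-1 : ℝ) ^ n * cc b n = (-1) ^ N * cc (b - 1) N := by
  induction N with
  | zero => simp [cc_zero]
  | succ N ih =>
    rw [Finset.sum_range_succ, ih, cc_pascal b]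
    ring

lemma cc_abs_succ {b : ℝ} {m : ℕ} (hle : b ≤ (m:ℝ)) :
    |cc b (m + 1)| = |cc b m| * ((m:ℝ) - b) / ((m:ℝ) + 1) := by
  have h2 : (0:ℝ) < (m:ℝ) + 1 := by positivity
  rw [cc_succ, abs_div, abs_mul, abs_sub_comm, abs_of_nonneg (sub_nonneg.mpr hle),
    abs_of_pos h2]

lemma summable_cc_div {b : ℝ} (hb : -1 < b) : Summable (fun n => |cc b n| / (n + 1 : ℝ)) := by
  obtain ⟨N₀, hN₀⟩ := exists_nat_ge b
  have hb1 : (0:ℝ) < b + 1 := by linarith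
  set f : ℕ → ℝ := fun n => |cc b (n + N₀)| with hf
  have hle : ∀ n : ℕ, b ≤ ((n + N₀ : ℕ) : ℝ) := by
    intro n; push_cast; linarith [Nat.cast_nonneg (α := ℝ) n]
  have hstep : ∀ n : ℕ, f n - f (n + 1) = f n * (b + 1) / (((n + N₀ : ℕ):ℝ) + 1) := by
    intro n
    have h2 : (0:ℝ) < ((n + N₀ : ℕ):ℝ) + 1 := by positivity
    have habs : f (n + 1) = f n * (((n + N₀ : ℕ):ℝ) - b) / (((n + N₀:ℕ):ℝ) + 1) := by
      show |cc b (n + 1 + N₀)| = _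
      have : n + 1 + N₀ = (n + N₀) + 1 := by omega
      rw [this, cc_abs_succ (hle n)]
    rw [habs]
    field_simp
    ring
  have hsum : Summable (fun n => |cc b (n + N₀)| / (((n + N₀ : ℕ):ℝ) + 1)) := by
    apply summable_of_sum_range_le (c := f 0 / (b + 1))
    · intro n; positivity
    · intro K
      have key : ∀ n : ℕ, |cc b (n + N₀)| / (((n + N₀ : ℕ):ℝ) + 1) = (f n - f (n + 1)) / (b + 1) := by
        intro n
        rw [hstep n]
        have h2 : (0:ℝ) < ((n + N₀ : ℕ):ℝ) + 1 := by positivity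
        rw [hf]
        field_simp
      calc ∑ n ∈ Finset.range K, |cc b (n + N₀)| / (((n + N₀ : ℕ):ℝ) + 1)
          = ∑ n ∈ Finset.range K, (f n - f (n + 1)) / (b + 1) :=
            Finset.sum_congr rfl (fun n _ => key n)
        _ = (f 0 - f K) / (b + 1) := by rw [← Finset.sum_div, Finset.sum_range_sub' f K]
        _ ≤ f 0 / (b + 1) := by gcongr; exact sub_le_self _ (abs_nonneg _)
  rw [← summable_nat_add_iff N₀]
  convert hsum using 2

lemma tendsto_cc_zero {b : ℝ} (hb : -1 < b) : Tendsto (fun n => cc b n) atTop (nhds 0) := by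
  obtain ⟨N₀, hN₀⟩ := exists_nat_ge b
  have hb1 : (0:ℝ) < b + 1 := by linarith
  set f : ℕ → ℝ := fun n => |cc b (n + N₀)| with hf
  have hle : ∀ n : ℕ, b ≤ ((n + N₀ : ℕ) : ℝ) := by
    intro n; push_cast; linarith [Nat.cast_nonneg (α := ℝ) n]
  have hanti : Antitone f := by
    apply antitone_nat_of_succ_le
    intro n
    have h2 : (0:ℝ) < ((n + N₀ : ℕ):ℝ) + 1 := by positivity
    have habs : f (n + 1) = f n * (((n + N₀ : ℕ):ℝ) - b) / (((n + N₀:ℕ):ℝ) + 1) := by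
      show |cc b (n + 1 + N₀)| = _
      have : n + 1 + N₀ = (n + N₀) + 1 := by omega
      rw [this, cc_abs_succ (hle n)]
    rw [habs, div_le_iff₀ h2]
    have h3 : ((n + N₀ : ℕ):ℝ) - b ≤ ((n + N₀ : ℕ):ℝ) + 1 := by linarith
    nlinarith [abs_nonneg (cc b (n + N₀))]
  have hbdd : BddBelow (Set.range f) := ⟨0, by rintro x ⟨n, rfl⟩; exact abs_nonneg _⟩
  have htend : Tendsto f atTop (nhds (⨅ n, f n)) := tendsto_atTop_ciInf hanti hbdd
  set L := ⨅ n, f n with hL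
  have hL0 : 0 ≤ L := le_ciInf fun n => abs_nonneg _
  have hLz : L = 0 := by
    by_contra h
    have hLpos : 0 < L := lt_of_le_of_ne hL0 (Ne.symm h)
    have hsum : Summable (fun n => |cc b (n + N₀)| / (((n + N₀:ℕ):ℝ) + 1)) := by
      have := summable_cc_div hb
      have h2 := (summable_nat_add_iff (f := fun n => |cc b n| / (n + 1 : ℝ)) N₀).mpr this
      convert h2 using 2
    have hsum2 : Summable (fun n => L / (((n + N₀:ℕ):ℝ) + 1)) := by
      apply Summable.of_nonneg_of_le (fun n => by positivity) ?_ hsum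
      intro n
      apply div_le_div_of_nonneg_right ?_ ?_ |>.trans_eq rfl
      · exact ciInf_le hbdd n
      · positivity
    have hsum3 : Summable (fun n => (((n + N₀:ℕ):ℝ) + 1)⁻¹) := by
      have := hsum2.mul_left L⁻¹
      convert this using 2 with n
      · rfl
      field_simp
    have hsum4 : Summable (fun n : ℕ => ((n:ℝ) + 1)⁻¹) := by
      rw [← summable_nat_add_iff N₀]
      convert hsum3 using 2
    have : ¬ Summable (fun n : ℕ => ((n:ℝ) + 1)⁻¹) := by
      have h := Real.not_summable_one_div_natCast
      intro hs
      apply h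
      rw [← summable_nat_add_iff 1]
      convert hs using 2 with n
      · rfl
      push_cast
      rw [one_div]
    exact this hsum4
  have habs : Tendsto (fun n => |cc b n|) atTop (nhds 0) := by
    rw [← tendsto_add_atTop_iff_nat N₀]
    rw [hLz] at htend
    exact htend
  rw [tendsto_zero_iff_norm_tendsto_zero]
  simpa [Real.norm_eq_abs] using habs

lemma summable_abs_cc {b : ℝ} (hb : 0 < b) : Summable (fun n => |cc b n|) := by
  have h1 : Summable (fun n => |cc b (n + 1)|) := by
    have : (fun n : ℕ => |cc b (n + 1)|) = fun n => b * (|cc (b - 1) n| / ((n:ℝ) + 1)) := by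
      funext n
      have h2 : (0:ℝ) < (n:ℝ) + 1 := by positivity
      have := cc_key b n
      have hcc : cc b (n + 1) = b * cc (b - 1) n / ((n:ℝ) + 1) := by
        field_simp at this ⊢
        linarith [this]
      rw [hcc, abs_div, abs_mul, abs_of_pos hb, abs_of_pos h2, mul_div_assoc]
    rw [this]
    exact (summable_cc_div (by linarith)).mul_left b
  exact (summable_nat_add_iff 1).mp h1

noncomputable def S (b : ℝ) : ℝ := ∑' n : ℕ, (-1 : ℝ) ^ n * cc b n / (2 * n + 1)

lemma summable_S {b : ℝ} (hb : -1 < b) :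
    Summable (fun n => (-1 : ℝ) ^ n * cc b n / (2 * n + 1)) := by
  apply Summable.of_abs
  apply Summable.of_nonneg_of_le (fun n => abs_nonneg _) ?_ (summable_cc_div hb)
  intro n
  have h1 : (0:ℝ) < 2 * n + 1 := by positivity
  rw [abs_div, abs_mul, abs_pow, abs_neg, abs_one, one_pow, one_mul, abs_of_pos h1]
  apply div_le_div_of_nonneg_left (abs_nonneg _) (by positivity) (by push_cast; linarith)
    |>.trans_eq rfl

lemma hasSum_alt_zero {b : ℝ} (hb : 0 < b) :
    HasSum (fun n => (-1 : ℝ) ^ n * cc b n) 0 := by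
  have hs : Summable (fun n => (-1 : ℝ) ^ n * cc b n) := by
    apply Summable.of_abs
    have := summable_abs_cc hb
    convert this using 2 with n
    · rfl
    rw [abs_mul, abs_pow, abs_neg, abs_one, one_pow, one_mul]
  have h1 := hs.hasSum
  have h2 := h1.tendsto_sum_nat
  have h3 : Tendsto (fun N => ∑ n ∈ Finset.range (N + 1), (-1:ℝ)^n * cc b n) atTop
      (nhds (∑' n, (-1:ℝ)^n * cc b n)) := h2.comp (tendsto_add_atTop_nat 1)
  have h4 : Tendsto (fun N => (-1:ℝ)^N * cc (b-1) N) atTop (nhds 0) := by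
    rw [tendsto_zero_iff_norm_tendsto_zero]
    have := tendsto_cc_zero (b := b - 1) (by linarith)
    rw [tendsto_zero_iff_norm_tendsto_zero] at this
    convert this using 2 with n
    simp [Real.norm_eq_abs, abs_mul]
  have h5 : (∑' n, (-1:ℝ)^n * cc b n) = 0 := by
    apply tendsto_nhds_unique ?_ h4
    convert h3 using 2 with N
    exact (cc_partial b N).symm
  rwa [h5] at h1

lemma S_rec {b : ℝ} (hb : (1:ℝ)/2 ≤ b) : (2 * b + 1) * S b = 2 * b * S (b - 1) := by
  have hb1 : -1 < b := by linarith
  have hb2 : -1 < b - 1 := by linarith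
  have hbne : b ≠ 0 := by positivity -- b > 0
  have s1 := summable_S hb1
  have s2 := summable_S hb2
  have key : ∀ n : ℕ, (2*b+1) * ((-1:ℝ)^n * cc b n / (2*n+1)) - 2*b * ((-1:ℝ)^n * cc (b-1) n / (2*n+1))
      = (-1:ℝ)^n * cc b n := by
    intro n
    have h1 : (0:ℝ) < 2 * n + 1 := by positivity
    have hsucc : cc b (n+1) = cc b n * (b - n) / ((n:ℝ) + 1) := cc_succ b n
    have h2 : ((n:ℝ) + 1) ≠ 0 := by positivity
    have hk : b * cc (b - 1) n = (b - (n:ℝ)) * cc b n := by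
      have := cc_key b n
      rw [hsucc] at this
      field_simp at this
      linarith
    field_simp
    linear_combination (-2:ℝ) * hk
  have hbpos : 0 < b := by linarith
  have main : (2*b+1) * S b - 2*b*S (b-1) = 0 := by
    rw [S, S, ← tsum_mul_left, ← tsum_mul_left,
      ← Summable.tsum_sub (s1.mul_left _) (s2.mul_left _), tsum_congr key]
    exact (hasSum_alt_zero hbpos).tsum_eq
  linarith

noncomputable def gg (b : ℝ) (t : ℝ) : ℝ := ∑' n : ℕ, cc b n * (-t) ^ n

lemma summable_cc_pow {b r : ℝ} (hb : -1 < b) (h0 : 0 ≤ r) (h1 : r < 1) :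
    Summable (fun n => |cc b n| * r ^ n) := by
  obtain ⟨N₀, hN₀⟩ := exists_nat_ge b
  apply summable_of_ratio_norm_eventually_le (r := r) h1
  filter_upwards [eventually_ge_atTop N₀] with n hn
  have hle : b ≤ (n:ℝ) := hN₀.trans (by exact_mod_cast hn)
  have h2 : (0:ℝ) < (n:ℝ) + 1 := by positivity
  have e : ∀ m : ℕ, ‖|cc b m| * r ^ m‖ = |cc b m| * r ^ m := fun m =>
    Real.norm_of_nonneg (by positivity)
  rw [e, e, pow_succ, cc_abs_succ hle]
  have hfrac : ((n:ℝ) - b) / ((n:ℝ) + 1) ≤ 1 := by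
    rw [div_le_one h2]; linarith
  have e2 : |cc b n| * ((n:ℝ) - b) / ((n:ℝ) + 1) * (r ^ n * r)
      = |cc b n| * (((n:ℝ) - b) / ((n:ℝ)+1)) * (r ^ n * r) := by ring
  rw [e2]
  calc |cc b n| * (((n:ℝ) - b) / ((n:ℝ)+1)) * (r^n * r)
      ≤ |cc b n| * 1 * (r ^ n * r) := by
        apply mul_le_mul_of_nonneg_right (mul_le_mul_of_nonneg_left hfrac (abs_nonneg _))
          (by positivity)
    _ = r * (|cc b n| * r ^ n) := by ring

lemma continuousOn_gg {b r : ℝ} (hb : -1 < b) (h0 : 0 ≤ r) (h1 : r < 1) :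
    ContinuousOn (gg b) (Set.Icc (-r) r) := by
  have hu := summable_cc_pow hb h0 h1
  have ht := tendstoUniformlyOn_tsum_nat hu (f := fun n x => cc b n * (-x) ^ n)
    (s := Set.Icc (-r) r) ?_
  · exact ht.continuousOn (Frequently.of_forall fun N => by fun_prop)
  · intro n x hx
    rw [Real.norm_eq_abs, abs_mul, abs_pow, abs_neg]
    apply mul_le_mul_of_nonneg_left ?_ (abs_nonneg _)
    exact pow_le_pow_left₀ (abs_nonneg x) (abs_le.mpr ⟨hx.1, hx.2⟩) n

lemma summable_gg {b t : ℝ} (hb : -1 < b) (ht : |t| < 1) :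
    Summable (fun n => cc b n * (-t) ^ n) := by
  apply Summable.of_abs
  apply Summable.of_nonneg_of_le (fun n => abs_nonneg _) ?_
    (summable_cc_pow hb (abs_nonneg t) ht)
  intro n
  rw [abs_mul, abs_pow, abs_neg]

-- term-by-term integration of gg on [0,y]
lemma integral_gg {b y : ℝ} (hb : -1 < b) (h0 : 0 ≤ y) (h1 : y < 1) :
    HasSum (fun n => cc b n * (-1) ^ n * y ^ (n + 1) / (n + 1))
      (∫ t in (0:ℝ)..y, gg b t) := by
  have habs : |y| < 1 := by rwa [abs_of_nonneg h0]
  have hFint : ∀ n : ℕ, Integrable (fun t => cc b n * (-t) ^ n)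
      (volume.restrict (Set.Ioc (0:ℝ) y)) := by
    intro n
    apply Continuous.integrableOn_Ioc
    fun_prop
  have hnorm : ∀ n : ℕ, ∫ t in Set.Ioc (0:ℝ) y, ‖cc b n * (-t) ^ n‖ ≤ |cc b n| * y ^ n := by
    intro n
    have : ∀ t ∈ Set.Ioc (0:ℝ) y, ‖cc b n * (-t) ^ n‖ ≤ |cc b n| * y ^ n := by
      intro t ht
      rw [Real.norm_eq_abs, abs_mul, abs_pow, abs_neg, abs_of_nonneg (le_of_lt ht.1)]
      exact mul_le_mul_of_nonneg_left (pow_le_pow_left₀ (le_of_lt ht.1) ht.2 n) (abs_nonneg _)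
    calc ∫ t in Set.Ioc (0:ℝ) y, ‖cc b n * (-t) ^ n‖
        ≤ ∫ _t in Set.Ioc (0:ℝ) y, |cc b n| * y ^ n := by
          apply setIntegral_mono_on ((hFint n).norm) (integrableOn_const ?_)
            measurableSet_Ioc this
          rw [Real.volume_Ioc]; exact ENNReal.ofReal_ne_top
      _ ≤ |cc b n| * y ^ n := by
          rw [setIntegral_const, measureReal_def, Real.volume_Ioc, smul_eq_mul]
          have hy' : ENNReal.toReal (ENNReal.ofReal (y - 0)) ≤ 1 := by
            rw [ENNReal.toReal_ofReal (by linarith)]; linarith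
          exact mul_le_of_le_one_left (by positivity) hy'
  have hsum : Summable (fun n => ∫ t in Set.Ioc (0:ℝ) y, ‖cc b n * (-t) ^ n‖) := by
    apply Summable.of_nonneg_of_le (fun n => integral_nonneg (fun t => norm_nonneg _)) hnorm
    exact summable_cc_pow hb h0 h1
  have H := hasSum_integral_of_summable_integral_norm hFint hsum
  have hval : ∀ n : ℕ, (∫ t in Set.Ioc (0:ℝ) y, cc b n * (-t) ^ n)
      = cc b n * (-1) ^ n * y ^ (n + 1) / (n + 1) := by
    intro n
    rw [← intervalIntegral.integral_of_le h0]
    have efun : (fun t : ℝ => cc b n * (-t) ^ n) = fun t => (cc b n * (-1) ^ n) * t ^ n := by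
      funext t
      rw [show (-t : ℝ) = (-1) * t by ring, mul_pow]
      ring
    rw [efun, intervalIntegral.integral_const_mul, integral_pow,
      zero_pow (Nat.succ_ne_zero n)]
    ring
  have hgval : (∫ t in Set.Ioc (0:ℝ) y, gg b t) = ∫ t in (0:ℝ)..y, gg b t := by
    rw [intervalIntegral.integral_of_le h0]
  rw [← hgval]
  have : (∫ t in Set.Ioc (0:ℝ) y, ∑' n : ℕ, cc b n * (-t) ^ n)
      = ∫ t in Set.Ioc (0:ℝ) y, gg b t := rfl
  rw [this] at H
  convert H using 1
  · rfl
  funext n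
  exact (hval n).symm

-- the integral equation : (1 - y) * gg b y = 1 - (b+1) * ∫_0^y gg
lemma gg_eq {b y : ℝ} (hb : -1 < b) (h0 : 0 ≤ y) (h1 : y < 1) :
    (1 - y) * gg b y = 1 - (b + 1) * ∫ t in (0:ℝ)..y, gg b t := by
  have habs : |y| < 1 := by rwa [abs_of_nonneg h0]
  have hsg := summable_gg hb habs
  -- u n = cc b n * (-1)^n * y^(n+1)
  have hsu : Summable (fun n => cc b n * (-1:ℝ) ^ n * y ^ (n + 1)) := by
    apply Summable.of_abs
    apply Summable.of_nonneg_of_le (fun n => abs_nonneg _) ?_ (summable_cc_pow hb h0 h1)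
    intro n
    rw [abs_mul, abs_mul, abs_pow, abs_pow, abs_neg, abs_one, one_pow, mul_one,
      abs_of_nonneg h0, pow_succ]
    calc |cc b n| * (y ^ n * y) ≤ |cc b n| * (y ^ n * 1) := by
          apply mul_le_mul_of_nonneg_left (mul_le_mul_of_nonneg_left h1.le (by positivity))
            (abs_nonneg _)
      _ = |cc b n| * y ^ n := by ring
  have hsv : Summable (fun n => cc b n * (-1:ℝ) ^ n * y ^ (n + 1) / (n + 1)) :=
    (integral_gg hb h0 h1).summable
  -- gg b y = 1 + ∑' n, cc b (n+1) * (-y)^(n+1)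
  have hsplit : gg b y = 1 + ∑' n : ℕ, cc b (n + 1) * (-y) ^ (n + 1) := by
    rw [gg, Summable.tsum_eq_zero_add hsg, cc_zero]
    simp
  have hterm : ∀ n : ℕ, cc b (n + 1) * (-y) ^ (n + 1)
      = cc b n * (-1:ℝ) ^ n * y ^ (n + 1)
        - (b + 1) * (cc b n * (-1:ℝ) ^ n * y ^ (n + 1) / (n + 1)) := by
    intro n
    have h2 : ((n:ℝ) + 1) ≠ 0 := by positivity
    rw [cc_succ, show (-y : ℝ) = (-1) * y by ring, mul_pow]
    field_simp
    ring
  have hsum2 : (∑' n : ℕ, cc b (n + 1) * (-y) ^ (n + 1))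
      = y * gg b y - (b + 1) * ∫ t in (0:ℝ)..y, gg b t := by
    rw [tsum_congr hterm, Summable.tsum_sub hsu ((integral_gg hb h0 h1).summable.mul_left _)]
    congr 1
    · rw [gg, ← tsum_mul_left]
      apply tsum_congr
      intro n
      rw [show (-y : ℝ) = (-1) * y by ring, mul_pow, pow_succ]
      ring
    · rw [tsum_mul_left, (integral_gg hb h0 h1).tsum_eq]
  have hfin : gg b y = 1 + (y * gg b y - (b + 1) * ∫ t in (0:ℝ)..y, gg b t) := by
    conv_lhs => rw [hsplit, hsum2]
  linear_combination hfin

lemma gg_val {b Y : ℝ} (hb : -1 < b) (h0 : 0 ≤ Y) (h1 : Y < 1) :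
    gg b Y = (1 - Y) ^ b := by
  set r : ℝ := (Y + 1) / 2 with hr
  have hYr : Y < r := by rw [hr]; linarith
  have hr1 : r < 1 := by rw [hr]; linarith
  have hr0 : 0 < r := by rw [hr]; linarith
  have hgc : ContinuousOn (gg b) (Set.Icc (-r) r) := continuousOn_gg hb hr0.le hr1
  have hca : ∀ x ∈ Set.Ioo (-r) r, ContinuousAt (gg b) x := by
    intro x hx
    exact hgc.continuousAt (Icc_mem_nhds hx.1 hx.2)
  have hmem : ∀ x ∈ Set.Icc 0 Y, x ∈ Set.Ioo (-r) r := by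
    intro x hx
    exact ⟨by linarith [hx.1], by linarith [hx.2]⟩
  have hint : ∀ x ∈ Set.Icc 0 Y, IntervalIntegrable (gg b) volume 0 x := by
    intro x hx
    apply (hgc.mono ?_).intervalIntegrable
    rw [Set.uIcc_of_le hx.1]
    intro t ht
    exact ⟨by linarith [ht.1], by linarith [ht.2, hx.2]⟩
  set F : ℝ → ℝ := fun x => ∫ t in (0:ℝ)..x, gg b t with hF
  have hFd : ∀ x ∈ Set.Icc 0 Y, HasDerivAt F (gg b x) x := by
    intro x hx
    exact integral_hasDerivAt_right (hint x hx)
      (ContinuousAt.stronglyMeasurableAtFilter isOpen_Ioo hca x (hmem x hx))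
      (hca x (hmem x hx))
  set p : ℝ := -(b + 1) with hp
  set ψ : ℝ → ℝ := fun x => (1 - (b + 1) * F x) * (1 - x) ^ p with hψ
  have hψd : ∀ x ∈ Set.Icc 0 Y, HasDerivAt ψ 0 x := by
    intro x hx
    have hx1 : (0:ℝ) < 1 - x := by linarith [hx.2]
    have hx1' : (1 - x : ℝ) ≠ 0 := ne_of_gt hx1
    have hu : HasDerivAt (fun x => 1 - (b + 1) * F x) (-((b + 1) * gg b x)) x := by
      have := ((hFd x hx).const_mul (b + 1)).const_sub 1
      exact this
    have hlin : HasDerivAt (fun x : ℝ => 1 - x) (-1) x := by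
      simpa using (hasDerivAt_id x).const_sub 1
    have hw : HasDerivAt (fun x : ℝ => (1 - x) ^ p) ((-1) * p * (1 - x) ^ (p - 1)) x :=
      hlin.rpow_const (Or.inl hx1')
    have hmul := hu.mul hw
    have hval : -((b + 1) * gg b x) * (1 - x) ^ p
        + (1 - (b + 1) * F x) * ((-1) * p * (1 - x) ^ (p - 1)) = 0 := by
      have he : (1 - x) * gg b x = 1 - (b + 1) * F x := gg_eq hb hx.1 (lt_of_le_of_lt hx.2 h1)
      rw [← he]
      have hrp : (1 - x) ^ p = (1 - x) ^ (p - 1) * (1 - x) := by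
        rw [← Real.rpow_add_one hx1' (p - 1)]
        ring_nf
      rw [hrp, hp]
      ring
    rw [hval] at hmul
    exact hmul
  have hcont : ContinuousOn ψ (Set.Icc 0 Y) := fun x hx =>
    (hψd x hx).continuousAt.continuousWithinAt
  have hconst := constant_of_has_deriv_right_zero hcont
    (fun x hx => (hψd x (Set.Ico_subset_Icc_self hx)).hasDerivWithinAt) Y
    (Set.right_mem_Icc.mpr h0)
  have hψ0 : ψ 0 = 1 := by
    rw [hψ]
    simp [hF, intervalIntegral.integral_same, Real.one_rpow]
  rw [hψ0] at hconst
  -- ψ Y = 1 : (1 - (b+1) F Y) * (1-Y)^p = 1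
  have hY1 : (0:ℝ) < 1 - Y := by linarith
  have hup : (1 - (b + 1) * F Y) = (1 - Y) ^ (b + 1) := by
    have hrp : ((1 - Y) ^ p) = ((1 - Y) ^ (b + 1))⁻¹ := by
      rw [hp, Real.rpow_neg hY1.le]
    rw [hψ] at hconst
    simp only [] at hconst
    rw [hrp] at hconst
    have hne : ((1 - Y) ^ (b + 1) : ℝ) ≠ 0 := by
      exact ne_of_gt (Real.rpow_pos_of_pos hY1 _)
    field_simp at hconst
    linarith [hconst]
  have he : (1 - Y) * gg b Y = 1 - (b + 1) * F Y := gg_eq hb h0 h1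
  have hfin : (1 - Y) * gg b Y = (1 - Y) * (1 - Y) ^ b := by
    rw [he, hup, Real.rpow_add_one (ne_of_gt hY1) b]
    ring
  exact mul_left_cancel₀ (ne_of_gt hY1) hfin

lemma S_eq_integral {b : ℝ} (hb : -1 < b) :
    S b = ∫ x in Set.Ioc (0:ℝ) 1, (1 - x ^ 2) ^ b := by
  set F : ℕ → ℝ → ℝ := fun n x => (-1 : ℝ) ^ n * cc b n * x ^ (2 * n) with hFdef
  have hFint : ∀ n : ℕ, Integrable (F n) (volume.restrict (Set.Ioc (0:ℝ) 1)) := by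
    intro n
    apply Continuous.integrableOn_Ioc
    fun_prop
  have hval : ∀ n : ℕ, (∫ x in Set.Ioc (0:ℝ) 1, F n x)
      = (-1:ℝ) ^ n * cc b n / (2 * n + 1) := by
    intro n
    rw [← intervalIntegral.integral_of_le zero_le_one]
    rw [hFdef]
    simp only []
    rw [intervalIntegral.integral_const_mul, integral_pow]
    rw [one_pow, zero_pow (by omega : 2 * n + 1 ≠ 0)]
    push_cast
    ring
  have hnormval : ∀ n : ℕ, (∫ x in Set.Ioc (0:ℝ) 1, ‖F n x‖)
      = |cc b n| / (2 * n + 1) := by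
    intro n
    have : ∀ x ∈ Set.Ioc (0:ℝ) 1, ‖F n x‖ = |cc b n| * x ^ (2 * n) := by
      intro x hx
      rw [hFdef]
      simp only [Real.norm_eq_abs, abs_mul, abs_pow, abs_neg, abs_one, one_pow, one_mul,
        abs_of_nonneg (le_of_lt hx.1)]
    rw [setIntegral_congr_fun measurableSet_Ioc this,
      ← intervalIntegral.integral_of_le zero_le_one,
      intervalIntegral.integral_const_mul, integral_pow,
      one_pow, zero_pow (by omega : 2 * n + 1 ≠ 0)]
    push_cast
    ring
  have hsum : Summable (fun n => ∫ x in Set.Ioc (0:ℝ) 1, ‖F n x‖) := by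
    rw [funext hnormval]
    apply Summable.of_nonneg_of_le (fun n => by positivity) ?_ (summable_cc_div hb)
    intro n
    apply div_le_div_of_nonneg_left (abs_nonneg _) (by positivity) (by push_cast; linarith)
      |>.trans_eq rfl
  have H := hasSum_integral_of_summable_integral_norm hFint hsum
  have hae : (∫ x in Set.Ioc (0:ℝ) 1, ∑' n, F n x)
      = ∫ x in Set.Ioc (0:ℝ) 1, (1 - x ^ 2) ^ b := by
    apply setIntegral_congr_ae measurableSet_Ioc
    have h1 : {x : ℝ | x ≠ 1} ∈ ae volume := by
      rw [mem_ae_iff]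
      simp [Set.compl_setOf, Real.volume_singleton]
    filter_upwards [h1] with x hx1 hx
    have hx0 : 0 ≤ x ^ 2 := sq_nonneg x
    have hx2 : x ^ 2 < 1 := by
      have : x < 1 := lt_of_le_of_ne hx.2 hx1
      nlinarith [hx.1]
    have := gg_val hb hx0 hx2
    rw [gg] at this
    rw [← this]
    apply tsum_congr
    intro n
    rw [hFdef]
    simp only []
    rw [show (-(x^2) : ℝ) = (-1) * x^2 by ring, mul_pow, ← pow_mul]
    ring
  rw [← hae, S]
  rw [← H.tsum_eq]
  exact tsum_congr fun n => (hval n).symm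

lemma S_zero : S 0 = 1 := by
  rw [S]
  have hz : ∀ n : ℕ, (-1 : ℝ) ^ n * cc 0 n / (2 * n + 1) = if n = 0 then 1 else 0 := by
    intro n
    cases n with
    | zero => simp [cc]
    | succ m =>
      have : cc 0 (m + 1) = 0 := by
        rw [cc]
        rw [Finset.prod_eq_zero (Finset.mem_range.mpr (Nat.succ_pos m))]
        · simp
        · simp
      simp [this]
  rw [funext hz]
  exact tsum_ite_eq 0 1

lemma sqrt_integral : ∫ x in (0:ℝ)..1, Real.sqrt (1 - x ^ 2) = π / 4 := by
  have hcont : Continuous (fun x : ℝ => Real.sqrt (1 - x ^ 2)) := by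
    apply Real.continuous_sqrt.comp
    fun_prop
  have hi1 : IntervalIntegrable (fun x : ℝ => Real.sqrt (1 - x ^ 2)) volume (-1) 0 :=
    hcont.intervalIntegrable _ _
  have hi2 : IntervalIntegrable (fun x : ℝ => Real.sqrt (1 - x ^ 2)) volume 0 1 :=
    hcont.intervalIntegrable _ _
  have hadd := intervalIntegral.integral_add_adjacent_intervals hi1 hi2
  have hsym : (∫ x in (-1:ℝ)..0, Real.sqrt (1 - x ^ 2)) = ∫ x in (0:ℝ)..1, Real.sqrt (1 - x ^ 2) := by
    have := intervalIntegral.integral_comp_neg (a := 0) (b := 1)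
      (fun x : ℝ => Real.sqrt (1 - x ^ 2))
    simp only [neg_zero, neg_neg] at this
    rw [← this]
    apply intervalIntegral.integral_congr
    intro x _
    simp [neg_pow]
  rw [integral_sqrt_one_sub_sq] at hadd
  rw [hsym] at hadd
  linarith

lemma S_half : S (1/2 : ℝ) = π / 4 := by
  rw [S_eq_integral (by norm_num)]
  have : ∀ x ∈ Set.Ioc (0:ℝ) 1, ((1 - x ^ 2) ^ ((1:ℝ)/2) : ℝ) = Real.sqrt (1 - x ^ 2) := by
    intro x hx
    exact (Real.sqrt_eq_rpow _).symm
  rw [setIntegral_congr_fun measurableSet_Ioc this,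
    ← intervalIntegral.integral_of_le zero_le_one, sqrt_integral]

lemma P_eq_S (i : ℕ) : P i = S (((i:ℝ) - 1) / 2) := by
  have ha : ((i:ℝ) + 1) / 2 ≠ 0 := by positivity
  have ha2 : ((i:ℝ) + 1) ≠ 0 := by positivity
  rw [P, S, ← tsum_mul_left]
  apply tsum_congr
  intro n
  have hfac : ((n.factorial : ℝ)) ≠ 0 := Nat.cast_ne_zero.mpr n.factorial_ne_zero
  have h2n : (2 * (n:ℝ) + 1) ≠ 0 := by positivity
  have hprod : (∏ j ∈ Finset.range (n+1), (((i:ℝ)+1)/2 - j))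
      = (∏ j ∈ Finset.range n, (((i:ℝ)-1)/2 - j)) * (((i:ℝ)+1)/2) := by
    rw [Finset.prod_range_succ']
    push_cast
    congr 1
    · apply Finset.prod_congr rfl
      intro j _
      ring
    · ring
  rw [hprod, cc]
  field_simp

theorem stmt_2 (i : ℕ) (hi : 2 ≤ i) : π = 2 * (i : ℝ) * P i * P (i - 1) := by
  have key : ∀ k : ℕ, 2 ≤ k → 2 * (k:ℝ) * S (((k:ℝ) - 1)/2) * S (((k:ℝ) - 2)/2) = π := by
    intro k hk
    induction k, hk using Nat.le_induction with
    | base =>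
      norm_num
      rw [S_half, S_zero]
      ring
    | succ k hk ih =>
      have hb : (1:ℝ)/2 ≤ (k:ℝ)/2 := by
        have : (1:ℝ) ≤ (k:ℝ) := by exact_mod_cast Nat.one_le_of_lt hk
        linarith
      have hrec := S_rec hb
      push_cast
      have e1 : ((k:ℝ) + 1 - 1)/2 = (k:ℝ)/2 := by ring
      have e2 : ((k:ℝ) + 1 - 2)/2 = ((k:ℝ) - 1)/2 := by ring
      have e3 : (k:ℝ)/2 - 1 = ((k:ℝ) - 2)/2 := by ring
      rw [e1, e2]
      rw [e3] at hrec
      have h2b1 : 2 * ((k:ℝ)/2) + 1 = (k:ℝ) + 1 := by ring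
      have h2b : 2 * ((k:ℝ)/2) = (k:ℝ) := by ring
      rw [h2b1, h2b] at hrec
      calc 2 * ((k:ℝ) + 1) * S ((k:ℝ)/2) * S (((k:ℝ) - 1)/2)
          = 2 * S (((k:ℝ) - 1)/2) * (((k:ℝ) + 1) * S ((k:ℝ)/2)) := by ring
        _ = 2 * S (((k:ℝ) - 1)/2) * ((k:ℝ) * S (((k:ℝ) - 2)/2)) := by rw [hrec]
        _ = 2 * (k:ℝ) * S (((k:ℝ) - 1)/2) * S (((k:ℝ) - 2)/2) := by ring
        _ = π := ih
  have hc : ((i - 1 : ℕ) : ℝ) = (i:ℝ) - 1 := by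
    have : 1 ≤ i := by omega
    push_cast [this]
    ring
  rw [P_eq_S, P_eq_S, hc, show ((i:ℝ) - 1 - 1)/2 = ((i:ℝ) - 2)/2 by ring]
  exact (key i hi).symm
end

section
/- The two expressions (2/i)·Σ_{n=0}^∞ (−1)^n · (∏_{j=0}^{n} (i/2 − j)) / (n!·(2n+1)) and 1 + Σ_{n=1}^∞ (−1)^n · (∏_{j=1}^{n} ((i+1)/(2j) − 1)) / (2n+1), evaluated with i replaced by i−1 in the first, are equal; i.e., P_{i−1} defined via Equation 12 agrees with P_{i−1} defined via Equation 20. -/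
open Finset

private noncomputable def Qr (r : ℝ) (n : ℕ) : ℝ :=
  ∏ j ∈ Finset.Icc 1 n, (r / (2 * (j : ℝ)) - 1)

private noncomputable def hr (r : ℝ) (n : ℕ) : ℝ :=
  (-1) ^ n * Qr r n / (2 * (n : ℝ) + 1)

private lemma Qr_succ (r : ℝ) (n : ℕ) :
    Qr r (n + 1) = Qr r n * (r / (2 * ((n : ℝ) + 1)) - 1) := by
  unfold Qr
  rw [Finset.prod_Icc_succ_top (Nat.le_add_left 1 n)]
  push_cast; ring_nf

private lemma prod_eq (r : ℝ) (n : ℕ) :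
    ∏ j ∈ Finset.range (n + 1), (r / 2 - (j : ℝ)) =
      (r / 2) * (n.factorial : ℝ) * Qr r n := by
  induction n with
  | zero => simp [Qr]
  | succ n ih =>
    rw [Finset.prod_range_succ, ih, Qr_succ]
    have h1 : ((n : ℝ) + 1) ≠ 0 := by positivity
    rw [Nat.factorial_succ]
    push_cast
    field_simp

private lemma Qr_decay (i : ℕ) (hi : 2 ≤ i) :
    ∀ n, i ≤ n → |Qr i n| * n ≤ |Qr i i| * i := by
  intro n hn
  induction n, hn using Nat.le_induction with
  | base => exact le_rfl
  | succ n hn ih =>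
    rw [Qr_succ, abs_mul]
    have hn1 : (0:ℝ) < (n : ℝ) + 1 := by positivity
    have hri : (i : ℝ) ≤ 2 * ((n : ℝ) + 1) := by
      have : (i : ℝ) ≤ (n : ℝ) := by exact_mod_cast hn
      linarith
    have hfac : |(i : ℝ) / (2 * ((n : ℝ) + 1)) - 1| = 1 - (i : ℝ) / (2 * ((n : ℝ) + 1)) := by
      rw [abs_of_nonpos]
      · ring
      · rw [sub_nonpos, div_le_one (by positivity)]; exact hri
    have h2 : (2 : ℝ) ≤ (i : ℝ) := by exact_mod_cast hi
    have hb : |(i : ℝ) / (2 * ((n : ℝ) + 1)) - 1| ≤ (n : ℝ) / ((n : ℝ) + 1) := by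
      rw [hfac]
      have h3 : 1/((n:ℝ)+1) ≤ (i:ℝ)/(2*((n:ℝ)+1)) := by
        rw [div_le_div_iff₀ hn1 (by positivity)]
        nlinarith
      have h4 : (n:ℝ)/((n:ℝ)+1) = 1 - 1/((n:ℝ)+1) := by field_simp; ring
      linarith
    push_cast
    calc |Qr (i:ℝ) n| * |(i : ℝ) / (2 * ((n : ℝ) + 1)) - 1| * ((n:ℝ)+1)
        ≤ |Qr (i:ℝ) n| * ((n : ℝ) / ((n : ℝ) + 1)) * ((n:ℝ)+1) := by
          exact mul_le_mul_of_nonneg_right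
            (mul_le_mul_of_nonneg_left hb (abs_nonneg _)) (by positivity)
      _ = |Qr (i:ℝ) n| * (n : ℝ) := by field_simp
      _ ≤ |Qr i i| * i := ih

private lemma hr_summable (i : ℕ) (hi : 2 ≤ i) : Summable (hr i) := by
  set C : ℝ := |Qr i i| * i with hC
  have hC0 : 0 ≤ C := by positivity
  apply Summable.of_norm_bounded_eventually_nat (g := fun n => C * (1 / (n : ℝ) ^ 2))
  · exact (Real.summable_one_div_nat_pow.mpr one_lt_two).mul_left C
  · filter_upwards [Filter.eventually_ge_atTop i] with n hn
    have hn0 : (0:ℝ) < (n:ℝ) := by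
      have : 0 < n := lt_of_lt_of_le (by omega) hn
      exact_mod_cast this
    have hq := Qr_decay i hi n hn
    have h1 : ‖hr i n‖ = |Qr i n| / (2 * (n:ℝ) + 1) := by
      rw [hr, Real.norm_eq_abs, abs_div, abs_mul, abs_pow, abs_neg, abs_one, one_pow, one_mul,
        abs_of_pos (by positivity : (0:ℝ) < 2 * (n:ℝ) + 1)]
    rw [h1]
    have hQn : |Qr i n| ≤ C / (n:ℝ) := by
      rw [le_div_iff₀ hn0]; exact hq
    calc |Qr i n| / (2 * (n:ℝ) + 1) ≤ (C / (n:ℝ)) / (2 * (n:ℝ) + 1) := by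
          apply div_le_div_of_nonneg_right hQn (by positivity)
      _ ≤ C * (1 / (n:ℝ) ^ 2) := by
          rw [div_div, mul_one_div, div_le_div_iff₀ (by positivity) (by positivity)]
          nlinarith
      
theorem stmt_10 (i : ℕ) (hi : 2 ≤ i) :
    (2 / (i : ℝ)) *
      ∑' n : ℕ, (-1 : ℝ) ^ n *
        (∏ j ∈ Finset.range (n + 1), ((i : ℝ) / 2 - (j : ℝ))) /
          ((n.factorial : ℝ) * (2 * (n : ℝ) + 1)) =
    1 + ∑' n : ℕ, (-1 : ℝ) ^ (n + 1) *
      (∏ j ∈ Finset.Icc 1 (n + 1), ((i : ℝ) / (2 * (j : ℝ)) - 1)) /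
        (2 * ((n : ℝ) + 1) + 1) := by
  have hi0 : ((i : ℝ)) ≠ 0 := by positivity
  have hterm : ∀ n : ℕ,
      (-1 : ℝ) ^ n * (∏ j ∈ Finset.range (n + 1), ((i : ℝ) / 2 - (j : ℝ))) /
        ((n.factorial : ℝ) * (2 * (n : ℝ) + 1)) = ((i:ℝ)/2) * hr i n := by
    intro n
    rw [prod_eq, hr]
    have hf : ((n.factorial : ℝ)) ≠ 0 := by exact_mod_cast n.factorial_ne_zero
    have h2 : (2 * (n : ℝ) + 1) ≠ 0 := by positivity
    field_simp
  have hL : (∑' n : ℕ, (-1 : ℝ) ^ n *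
        (∏ j ∈ Finset.range (n + 1), ((i : ℝ) / 2 - (j : ℝ))) /
          ((n.factorial : ℝ) * (2 * (n : ℝ) + 1))) = ((i:ℝ)/2) * ∑' n, hr i n := by
    rw [← tsum_mul_left]; exact tsum_congr hterm
  rw [hL]
  have hLHS : 2 / (i:ℝ) * ((i:ℝ)/2 * ∑' n, hr i n) = ∑' n, hr i n := by
    field_simp
  rw [hLHS]
  have hsum := hr_summable i hi
  rw [Summable.tsum_eq_zero_add hsum]
  have h0 : hr i 0 = 1 := by simp [hr, Qr]
  rw [h0]
  congr 1
  apply tsum_congr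
  intro n
  rw [hr, Qr]
  push_cast
  ring
end
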